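/- Let U_X, U_Y, U'_X, U'_Y be unitaries on a finite-dimensional Hilbert space, Ψ₀ a unit vector, and P₀ = |Ψ₀⟩⟨Ψ₀|. Set δ_X = ‖(1−P₀)U_XΨ₀‖, δ_Y = ‖(1−P₀)U_YΨ₀‖, and assume ‖(1−P₀)U_X^†Ψ₀‖ = δ_X and ‖(1−P₀)U_Y^†Ψ₀‖ = δ_Y. Then |⟨Ψ₀, U_Y^† U_X^† U_Y U_X Ψ₀⟩ − 1| ≤ 2(δ_X² + δ_Y²) + 4 δ_X δ_Y + δ_X² δ_Y². -/

import Mathlib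

open scoped InnerProductSpace
open ContinuousLinearMap
set_option maxHeartbeats 1000000 in

/-- Let `U_X`, `U_Y` be unitaries on a finite-dimensional Hilbert space, `Ψ₀` a unit
vector with projector `P₀ = |Ψ₀⟩⟨Ψ₀|`. With `δ_X = ‖(1−P₀)U_XΨ₀‖`, `δ_Y = ‖(1−P₀)U_YΨ₀‖`,
and assuming `‖(1−P₀)U_X†Ψ₀‖ = δ_X`, `‖(1−P₀)U_Y†Ψ₀‖ = δ_Y`, one has
`|⟨Ψ₀, U_Y†U_X†U_YU_X Ψ₀⟩ − 1| ≤ 2(δ_X² + δ_Y²) + 4δ_Xδ_Y + δ_X²δ_Y²`. -/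
theorem loop_overlap_estimate {E : Type*} [NormedAddCommGroup E] [InnerProductSpace ℂ E]
    [FiniteDimensional ℂ E]
    (UX UY : E →L[ℂ] E)
    (hUX : UX ∈ unitary (E →L[ℂ] E)) (hUY : UY ∈ unitary (E →L[ℂ] E))
    (Ψ₀ : E) (hΨ₀ : ‖Ψ₀‖ = 1) (δX δY : ℝ)
    (hδX : ‖UX Ψ₀ - ⟪Ψ₀, UX Ψ₀⟫_ℂ • Ψ₀‖ = δX)
    (hδY : ‖UY Ψ₀ - ⟪Ψ₀, UY Ψ₀⟫_ℂ • Ψ₀‖ = δY)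
    (hδX' : ‖(ContinuousLinearMap.adjoint UX) Ψ₀ -
      ⟪Ψ₀, (ContinuousLinearMap.adjoint UX) Ψ₀⟫_ℂ • Ψ₀‖ = δX)
    (hδY' : ‖(ContinuousLinearMap.adjoint UY) Ψ₀ -
      ⟪Ψ₀, (ContinuousLinearMap.adjoint UY) Ψ₀⟫_ℂ • Ψ₀‖ = δY) :
    ‖⟪Ψ₀, (ContinuousLinearMap.adjoint UY)
        ((ContinuousLinearMap.adjoint UX) (UY (UX Ψ₀)))⟫_ℂ - 1‖ ≤
      2 * (δX ^ 2 + δY ^ 2) + 4 * δX * δY + δX ^ 2 * δY ^ 2 := by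
  set a : ℂ := ⟪Ψ₀, UX Ψ₀⟫_ℂ with ha
  set b : ℂ := ⟪Ψ₀, UY Ψ₀⟫_ℂ with hb
  set x : E := UX Ψ₀ - a • Ψ₀ with hx
  set y : E := UY Ψ₀ - b • Ψ₀ with hy
  -- adjoint overlaps are conjugates
  have haX : ⟪Ψ₀, (ContinuousLinearMap.adjoint UX) Ψ₀⟫_ℂ = starRingEnd ℂ a := by
    rw [adjoint_inner_right, ← inner_conj_symm, ha]
  have haY : ⟪Ψ₀, (ContinuousLinearMap.adjoint UY) Ψ₀⟫_ℂ = starRingEnd ℂ b := by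
    rw [adjoint_inner_right, ← inner_conj_symm, hb]
  set x' : E := (ContinuousLinearMap.adjoint UX) Ψ₀ - (starRingEnd ℂ a) • Ψ₀ with hx'
  set y' : E := (ContinuousLinearMap.adjoint UY) Ψ₀ - (starRingEnd ℂ b) • Ψ₀ with hy'
  rw [haX] at hδX'
  rw [haY] at hδY'
  have hip : ⟪Ψ₀, Ψ₀⟫_ℂ = 1 := by
    rw [inner_self_eq_norm_sq_to_K, hΨ₀]; norm_num
  have hox : ⟪Ψ₀, x⟫_ℂ = 0 := by
    rw [hx, inner_sub_right, inner_smul_right, hip, ← ha]; ring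
  have hoy : ⟪Ψ₀, y⟫_ℂ = 0 := by
    rw [hy, inner_sub_right, inner_smul_right, hip, ← hb]; ring
  -- norms
  have hδX0 : 0 ≤ δX := hδX ▸ norm_nonneg _
  have hδY0 : 0 ≤ δY := hδY ▸ norm_nonneg _
  -- |a|² = 1 - δX²
  have habs : ∀ (U : E →L[ℂ] E), U ∈ unitary (E →L[ℂ] E) →
      ∀ (c : ℂ) (z : E), c = ⟪Ψ₀, U Ψ₀⟫_ℂ → z = U Ψ₀ - c • Ψ₀ →
      ‖c‖ ^ 2 = 1 - ‖z‖ ^ 2 := by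
    intro U hU c z hc hz
    have h1 : ‖U Ψ₀‖ = 1 := by rw [U.norm_map_of_mem_unitary hU, hΨ₀]
    have hoz : ⟪c • Ψ₀, z⟫_ℂ = 0 := by
      rw [hz, inner_smul_left, inner_sub_right, inner_smul_right, hip, hc]
      ring
    have hsum := norm_add_sq_eq_norm_sq_add_norm_sq_of_inner_eq_zero _ _ hoz
    have heq : c • Ψ₀ + z = U Ψ₀ := by rw [hz]; abel
    rw [heq, h1, norm_smul, hΨ₀] at hsum
    simp only [mul_one] at hsum
    nlinarith [hsum]
  have hA : ‖a‖ ^ 2 = 1 - δX ^ 2 := by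
    have := habs UX hUX a x ha hx; rw [hδX] at this; exact this
  have hB : ‖b‖ ^ 2 = 1 - δY ^ 2 := by
    have := habs UY hUY b y hb hy; rw [hδY] at this; exact this
  have hA1 : ‖a‖ ≤ 1 := by nlinarith [norm_nonneg a]
  have hB1 : ‖b‖ ≤ 1 := by nlinarith [norm_nonneg b]
  -- decompositions
  have hUXΨ : UX Ψ₀ = a • Ψ₀ + x := by rw [hx]; abel
  have hUYΨ : UY Ψ₀ = b • Ψ₀ + y := by rw [hy]; abel
  set v2 : E := b • x + UX y with hv2
  set u2 : E := a • y + UY x with hu2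
  have hv : UX (UY Ψ₀) = (a * b) • Ψ₀ + v2 := by
    rw [hUYΨ, map_add, map_smul, hUXΨ, hv2, smul_add, smul_smul]
    module
  have hu : UY (UX Ψ₀) = (a * b) • Ψ₀ + u2 := by
    rw [hUXΨ, map_add, map_smul, hUYΨ, hu2, smul_add, smul_smul]
    module
  -- rewrite the quantity
  have hT : ⟪Ψ₀, (ContinuousLinearMap.adjoint UY)
        ((ContinuousLinearMap.adjoint UX) (UY (UX Ψ₀)))⟫_ℂ
      = ⟪UX (UY Ψ₀), UY (UX Ψ₀)⟫_ℂ := by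
    rw [adjoint_inner_right, adjoint_inner_right]
  set c : ℂ := starRingEnd ℂ (a * b) * (a * b) with hc
  have hexp : ⟪UX (UY Ψ₀), UY (UX Ψ₀)⟫_ℂ
      = c + starRingEnd ℂ (a * b) * ⟪Ψ₀, u2⟫_ℂ + (a * b) * ⟪v2, Ψ₀⟫_ℂ + ⟪v2, u2⟫_ℂ := by
    rw [hv, hu, hc]
    simp only [inner_add_left, inner_add_right, inner_smul_left, inner_smul_right, hip]
    ring
  -- bound the cross terms
  have hcross1 : ‖⟪Ψ₀, u2⟫_ℂ‖ ≤ δX * δY := by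
    have h1 : ⟪Ψ₀, u2⟫_ℂ = ⟪y', x⟫_ℂ := by
      rw [hu2, inner_add_right, inner_smul_right, hoy, hy', inner_sub_left,
        inner_smul_left, hox, ← adjoint_inner_left]
      ring
    rw [h1]
    calc ‖⟪y', x⟫_ℂ‖ = ‖⟪y', x⟫_ℂ‖ := rfl
      _ ≤ ‖y'‖ * ‖x‖ := norm_inner_le_norm _ _
      _ = δY * δX := by rw [hδY', hδX]
      _ = δX * δY := by ring
  have hcross2 : ‖⟪v2, Ψ₀⟫_ℂ‖ ≤ δX * δY := by
    have hyo : ⟪y, Ψ₀⟫_ℂ = 0 := by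
      rw [← inner_conj_symm, hoy, map_zero]
    have hxo : ⟪x, Ψ₀⟫_ℂ = 0 := by
      rw [← inner_conj_symm, hox, map_zero]
    have h1 : ⟪v2, Ψ₀⟫_ℂ = ⟪y, x'⟫_ℂ := by
      rw [hv2, inner_add_left, inner_smul_left, hxo,
        ← adjoint_inner_right, hx', inner_sub_right, inner_smul_right, hyo]
      ring
    rw [h1]
    calc ‖⟪y, x'⟫_ℂ‖ = ‖⟪y, x'⟫_ℂ‖ := rfl
      _ ≤ ‖y‖ * ‖x'‖ := norm_inner_le_norm _ _
      _ = δY * δX := by rw [hδY, hδX']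
      _ = δX * δY := by ring
  have hnv2 : ‖v2‖ ≤ δX + δY := by
    calc ‖v2‖ ≤ ‖b • x‖ + ‖UX y‖ := norm_add_le _ _
      _ = ‖b‖ * δX + δY := by
          rw [norm_smul, hδX, UX.norm_map_of_mem_unitary hUX, hδY]
      _ ≤ δX + δY := by nlinarith
  have hnu2 : ‖u2‖ ≤ δX + δY := by
    calc ‖u2‖ ≤ ‖a • y‖ + ‖UY x‖ := norm_add_le _ _
      _ = ‖a‖ * δY + δX := by
          rw [norm_smul, hδY, UY.norm_map_of_mem_unitary hUY, hδX]
      _ ≤ δX + δY := by nlinarith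
  have hcross3 : ‖⟪v2, u2⟫_ℂ‖ ≤ (δX + δY) ^ 2 := by
    calc ‖⟪v2, u2⟫_ℂ‖ = ‖⟪v2, u2⟫_ℂ‖ := rfl
      _ ≤ ‖v2‖ * ‖u2‖ := norm_inner_le_norm _ _
      _ ≤ (δX + δY) ^ 2 := by nlinarith [norm_nonneg v2, norm_nonneg u2]
  -- |c - 1|
  have hcval : ‖c - 1‖ ≤ δX ^ 2 + δY ^ 2 + δX ^ 2 * δY ^ 2 := by
    have h1 : c = ((‖a‖ ^ 2 * ‖b‖ ^ 2 : ℝ) : ℂ) := by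
      have h2 : c = (a * starRingEnd ℂ a) * (b * starRingEnd ℂ b) := by
        rw [hc, map_mul]; ring
      rw [h2, Complex.mul_conj, Complex.mul_conj, ← Complex.ofReal_mul,
        Complex.normSq_eq_norm_sq, Complex.normSq_eq_norm_sq]
    rw [h1, hA, hB]
    rw [show (((1 - δX ^ 2) * (1 - δY ^ 2) : ℝ) : ℂ) - 1
        = (((1 - δX ^ 2) * (1 - δY ^ 2) - 1 : ℝ) : ℂ) by push_cast; ring]
    rw [Complex.norm_real, Real.norm_eq_abs]
    rw [abs_le]
    constructor <;> nlinarith [sq_nonneg (δX * δY)]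
  have hab1 : ‖starRingEnd ℂ (a * b)‖ ≤ 1 := by
    rw [Complex.norm_conj, norm_mul]; nlinarith [norm_nonneg a, norm_nonneg b]
  have hab1' : ‖a * b‖ ≤ 1 := by
    rw [norm_mul]; nlinarith [norm_nonneg a, norm_nonneg b]
  rw [hT, hexp]
  have step : ‖c + starRingEnd ℂ (a * b) * ⟪Ψ₀, u2⟫_ℂ
      + (a * b) * ⟪v2, Ψ₀⟫_ℂ + ⟪v2, u2⟫_ℂ - 1‖
      ≤ ‖c - 1‖ + ‖starRingEnd ℂ (a * b)‖ * ‖⟪Ψ₀, u2⟫_ℂ‖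
        + ‖a * b‖ * ‖⟪v2, Ψ₀⟫_ℂ‖ + ‖⟪v2, u2⟫_ℂ‖ := by
    have : c + starRingEnd ℂ (a * b) * ⟪Ψ₀, u2⟫_ℂ + (a * b) * ⟪v2, Ψ₀⟫_ℂ + ⟪v2, u2⟫_ℂ - 1
        = (c - 1) + starRingEnd ℂ (a * b) * ⟪Ψ₀, u2⟫_ℂ + (a * b) * ⟪v2, Ψ₀⟫_ℂ + ⟪v2, u2⟫_ℂ := by
      ring
    rw [this]
    calc ‖_‖ ≤ ‖(c - 1) + starRingEnd ℂ (a * b) * ⟪Ψ₀, u2⟫_ℂ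
          + (a * b) * ⟪v2, Ψ₀⟫_ℂ‖ + ‖⟪v2, u2⟫_ℂ‖ := norm_add_le _ _
      _ ≤ ‖(c - 1) + starRingEnd ℂ (a * b) * ⟪Ψ₀, u2⟫_ℂ‖
          + ‖(a * b) * ⟪v2, Ψ₀⟫_ℂ‖ + ‖⟪v2, u2⟫_ℂ‖ := by
            gcongr; exact norm_add_le _ _
      _ ≤ ‖c - 1‖ + ‖starRingEnd ℂ (a * b) * ⟪Ψ₀, u2⟫_ℂ‖
          + ‖(a * b) * ⟪v2, Ψ₀⟫_ℂ‖ + ‖⟪v2, u2⟫_ℂ‖ := by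
            gcongr; exact norm_add_le _ _
      _ = _ := by simp only [norm_mul]
  refine step.trans ?_
  have b1 : ‖starRingEnd ℂ (a * b)‖ * ‖⟪Ψ₀, u2⟫_ℂ‖ ≤ δX * δY := by
    calc _ ≤ 1 * (δX * δY) := by
          apply mul_le_mul hab1 hcross1 (norm_nonneg _) zero_le_one
      _ = δX * δY := one_mul _
  have b2 : ‖a * b‖ * ‖⟪v2, Ψ₀⟫_ℂ‖ ≤ δX * δY := by
    calc _ ≤ 1 * (δX * δY) := by
          apply mul_le_mul hab1' hcross2 (norm_nonneg _) zero_le_one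
      _ = δX * δY := one_mul _
  nlinarith [hcval, hcross3, b1, b2]
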